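/- arXiv:2010.09596 — 2 statements merged into one kernel-verified Lean document; each statement's English description precedes it below -/
import Mathlib

section
/- Let p ∈ [1,∞). Let (N, W, B) be a random vector where N is ℕ-valued and W, B are nonnegative real random variables, and let (Y_j)_{j≥1} be i.i.d. nonnegative random variables with E[Y_1^p] < ∞, independent of (N, W, B). Then (E[(W·Σ_{j=1}^{N} Y_j + B)^p])^{1/p} ≤ (E[Y_1^p])^{1/p}·(E[(N·W)^p])^{1/p} + (E[B^p])^{1/p}. -/
open MeasureTheory ProbabilityTheory Filter

lemma lp_sum_le {Ω : Type*} [MeasurableSpace Ω] (P : Measure Ω) {p : ℝ} (hp : 1 ≤ p)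
    (F : ℕ → Ω → ENNReal) (hF : ∀ j, Measurable (F j)) (n : ℕ) :
    (∫⁻ ω, (∑ j ∈ Finset.range n, F j ω) ^ p ∂P) ^ (1/p)
      ≤ ∑ j ∈ Finset.range n, (∫⁻ ω, (F j ω) ^ p ∂P) ^ (1/p) := by
  have hp0 : 0 < p := lt_of_lt_of_le one_pos hp
  induction n with
  | zero =>
      simp only [Finset.range_zero, Finset.sum_empty, ENNReal.zero_rpow_of_pos hp0,
        lintegral_zero, ENNReal.zero_rpow_of_pos (by positivity : (0:ℝ) < 1/p), le_refl]
  | succ n ih =>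
      simp_rw [Finset.sum_range_succ]
      calc (∫⁻ ω, ((∑ j ∈ Finset.range n, F j ω) + F n ω) ^ p ∂P) ^ (1/p)
          ≤ (∫⁻ ω, (∑ j ∈ Finset.range n, F j ω) ^ p ∂P) ^ (1/p)
            + (∫⁻ ω, (F n ω) ^ p ∂P) ^ (1/p) :=
            ENNReal.lintegral_Lp_add_le
              (Finset.aemeasurable_fun_sum _ fun j _ => (hF j).aemeasurable)
              (hF n).aemeasurable hp
        _ ≤ _ := add_le_add_left ih _

/-- **Conditional-Minkowski random-sum inequality.**
Let `p ∈ [1,∞)`. Let `(N, W, B)` be a random vector where `N` is `ℕ`-valued and `W, B` are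
nonnegative real random variables, and let `(Y j)` be i.i.d. nonnegative random variables with
`E[Y₁^p] < ∞`, independent of `(N, W, B)`.  Then
`(E[(W·Σ_{j<N} Y_j + B)^p])^{1/p} ≤ (E[Y₁^p])^{1/p}·(E[(N·W)^p])^{1/p} + (E[B^p])^{1/p}`. -/
theorem random_sum_minkowski
    {Ω : Type*} [MeasurableSpace Ω] (P : Measure Ω) [IsProbabilityMeasure P]
    (p : ℝ) (hp : 1 ≤ p)
    (N : Ω → ℕ) (W B : Ω → ℝ) (Y : ℕ → Ω → ℝ)
    (hN : Measurable N) (hW : Measurable W) (hB : Measurable B)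
    (hY : ∀ j, Measurable (Y j))
    (hWpos : ∀ ω, 0 ≤ W ω) (hBpos : ∀ ω, 0 ≤ B ω) (hYpos : ∀ j ω, 0 ≤ Y j ω)
    (hYiid : iIndepFun Y P)
    (hYident : ∀ j, IdentDistrib (Y j) (Y 0) P P)
    (hYmom : ∫⁻ ω, ENNReal.ofReal (Y 0 ω ^ p) ∂P < ⊤)
    (hindep : IndepFun (fun ω => (N ω, W ω, B ω)) (fun ω j => Y j ω) P) :
    (∫⁻ ω, ENNReal.ofReal ((W ω * ∑ j ∈ Finset.range (N ω), Y j ω + B ω) ^ p) ∂P) ^ (1/p)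
      ≤ (∫⁻ ω, ENNReal.ofReal (Y 0 ω ^ p) ∂P) ^ (1/p)
          * (∫⁻ ω, ENNReal.ofReal (((N ω : ℝ) * W ω) ^ p) ∂P) ^ (1/p)
        + (∫⁻ ω, ENNReal.ofReal (B ω ^ p) ∂P) ^ (1/p) := by
  have hp0 : 0 < p := lt_of_lt_of_le one_pos hp
  set F : ℕ → Ω → ENNReal := fun j ω => ENNReal.ofReal (Y j ω) with hF
  have hFmeas : ∀ j, Measurable (F j) := fun j => (hY j).ennreal_ofReal
  set μY : ENNReal := ∫⁻ ω, ENNReal.ofReal (Y 0 ω ^ p) ∂P with hμY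
  -- identical distribution: each p-th moment equals μY
  have hFp : ∀ j, ∫⁻ ω, (F j ω) ^ p ∂P = μY := by
    intro j
    have hrp : Measurable (fun x : ℝ => ENNReal.ofReal (x ^ p)) :=
      (measurable_id.pow_const p).ennreal_ofReal
    have := ((hYident j).comp hrp).lintegral_eq
    simp only [Function.comp] at this
    rw [hμY, ← this]
    refine lintegral_congr fun ω => ?_
    rw [hF]
    exact ENNReal.ofReal_rpow_of_nonneg (hYpos j ω) hp0.le
  -- moment bound for fixed-length sums
  have hSn : ∀ n : ℕ, ∫⁻ ω, (∑ j ∈ Finset.range n, F j ω) ^ p ∂P ≤ (n : ENNReal) ^ p * μY := by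
    intro n
    have h1 := lp_sum_le P hp F hFmeas n
    have h2 : ∑ j ∈ Finset.range n, (∫⁻ ω, (F j ω) ^ p ∂P) ^ (1/p)
        = (n : ENNReal) * μY ^ (1/p) := by
      simp [hFp, Finset.sum_const, Finset.card_range, nsmul_eq_mul]
    rw [h2] at h1
    calc ∫⁻ ω, (∑ j ∈ Finset.range n, F j ω) ^ p ∂P
        = ((∫⁻ ω, (∑ j ∈ Finset.range n, F j ω) ^ p ∂P) ^ (1/p)) ^ p := by
          rw [← ENNReal.rpow_mul, one_div, inv_mul_cancel₀ hp0.ne', ENNReal.rpow_one]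
      _ ≤ ((n : ENNReal) * μY ^ (1/p)) ^ p := ENNReal.rpow_le_rpow h1 hp0.le
      _ = (n : ENNReal) ^ p * μY := by
          rw [ENNReal.mul_rpow_of_nonneg _ _ hp0.le, ← ENNReal.rpow_mul, one_div,
            inv_mul_cancel₀ hp0.ne', ENNReal.rpow_one]
  -- measurability of the random sum
  have hYvec : Measurable (fun ω => (fun j => Y j ω)) := measurable_pi_lambda _ hY
  set S : Ω → ℝ := fun ω => ∑ j ∈ Finset.range (N ω), Y j ω with hSdef
  have hSmeas : Measurable S := by
    have h : Measurable (fun q : (ℕ → ℝ) × ℕ => ∑ j ∈ Finset.range q.2, q.1 j) :=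
      measurable_from_prod_countable_left fun n =>
        show Measurable fun x : ℕ → ℝ => ∑ j ∈ Finset.range n, x j from
          Finset.measurable_sum _ fun j _ => measurable_pi_apply j
    exact h.comp (hYvec.prodMk hN)
  have hSpos : ∀ ω, 0 ≤ S ω := fun ω => Finset.sum_nonneg fun j _ => hYpos j ω
  -- split with Minkowski
  have hsplit : ∀ ω, ENNReal.ofReal ((W ω * S ω + B ω) ^ p)
      = (ENNReal.ofReal (W ω * S ω) + ENNReal.ofReal (B ω)) ^ p := by
    intro ω
    rw [← ENNReal.ofReal_rpow_of_nonneg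
        (add_nonneg (mul_nonneg (hWpos ω) (hSpos ω)) (hBpos ω)) hp0.le,
      ENNReal.ofReal_add (mul_nonneg (hWpos ω) (hSpos ω)) (hBpos ω)]
  have hmink : (∫⁻ ω, ENNReal.ofReal ((W ω * S ω + B ω) ^ p) ∂P) ^ (1/p)
      ≤ (∫⁻ ω, (ENNReal.ofReal (W ω * S ω)) ^ p ∂P) ^ (1/p)
        + (∫⁻ ω, (ENNReal.ofReal (B ω)) ^ p ∂P) ^ (1/p) := by
    simp_rw [hsplit]
    exact ENNReal.lintegral_Lp_add_le ((hW.mul hSmeas).ennreal_ofReal).aemeasurable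
      (hB.ennreal_ofReal).aemeasurable hp
  have hBterm : ∫⁻ ω, (ENNReal.ofReal (B ω)) ^ p ∂P = ∫⁻ ω, ENNReal.ofReal (B ω ^ p) ∂P :=
    lintegral_congr fun ω => ENNReal.ofReal_rpow_of_nonneg (hBpos ω) hp0.le
  -- the key estimate
  set g1 : ℕ → Ω → ENNReal :=
    fun n ω => Set.indicator (N ⁻¹' {n}) (fun ω => ENNReal.ofReal (W ω ^ p)) ω with hg1
  set g2 : ℕ → Ω → ENNReal := fun n ω => (∑ j ∈ Finset.range n, F j ω) ^ p with hg2
  have hg1meas : ∀ n, Measurable (g1 n) :=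
    fun n => ((hW.pow_const p).ennreal_ofReal).indicator (hN (measurableSet_singleton n))
  have hg2meas : ∀ n, Measurable (g2 n) := fun n =>
    (Finset.measurable_sum _ fun j _ => hFmeas j).pow_const _
  -- pointwise decomposition
  have hdecomp : ∀ ω, (ENNReal.ofReal (W ω * S ω)) ^ p = ∑' n, g1 n ω * g2 n ω := by
    intro ω
    rw [tsum_eq_single (N ω) (fun n hn => ?_)]
    · have hsum : (∑ j ∈ Finset.range (N ω), F j ω) = ENNReal.ofReal (S ω) := by
        rw [hSdef, ENNReal.ofReal_sum_of_nonneg fun j _ => hYpos j ω]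
      rw [hg1, hg2]
      simp only [Set.indicator_of_mem (show ω ∈ N ⁻¹' {N ω} from rfl)]
      rw [hsum, ENNReal.ofReal_rpow_of_nonneg (mul_nonneg (hWpos ω) (hSpos ω)) hp0.le,
        Real.mul_rpow (hWpos ω) (hSpos ω), ENNReal.ofReal_mul (Real.rpow_nonneg (hWpos ω) p),
        ← ENNReal.ofReal_rpow_of_nonneg (hSpos ω) hp0.le]
    · rw [hg1]
      simp only [Set.indicator_of_notMem (show ω ∉ N ⁻¹' {n} by simp [hn.symm]), zero_mul]
  -- independence factorization
  have hfact : ∀ n, ∫⁻ ω, g1 n ω * g2 n ω ∂P = (∫⁻ ω, g1 n ω ∂P) * (∫⁻ ω, g2 n ω ∂P) := by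
    intro n
    have hφ : Measurable (fun x : ℕ × ℝ × ℝ =>
        if x.1 = n then ENNReal.ofReal (x.2.1 ^ p) else 0) := by
      refine Measurable.ite ?_
        (((measurable_fst.comp measurable_snd).pow_const p).ennreal_ofReal) measurable_const
      exact measurable_fst (measurableSet_singleton n)
    have hψ : Measurable (fun y : ℕ → ℝ =>
        (∑ j ∈ Finset.range n, ENNReal.ofReal (y j)) ^ p) :=
      (Finset.measurable_sum _ fun j _ => (measurable_pi_apply j).ennreal_ofReal).pow_const _
    have hI : IndepFun (g1 n) (g2 n) P := by
      have e1 : g1 n = (fun x : ℕ × ℝ × ℝ =>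
          if x.1 = n then ENNReal.ofReal (x.2.1 ^ p) else 0) ∘ (fun ω => (N ω, W ω, B ω)) := by
        funext ω
        simp only [hg1, Function.comp_apply]
        rcases eq_or_ne (N ω) n with h | h
        · rw [Set.indicator_of_mem (by simp [h]), if_pos h]
        · rw [Set.indicator_of_notMem (by simp [h]), if_neg h]
      have e2 : g2 n = (fun y : ℕ → ℝ =>
          (∑ j ∈ Finset.range n, ENNReal.ofReal (y j)) ^ p) ∘ (fun ω j => Y j ω) := rfl
      rw [e1, e2]
      exact hindep.comp hφ hψ
    exact lintegral_mul_eq_lintegral_mul_lintegral_of_indepFun (hg1meas n) (hg2meas n) hI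
  have hkey : ∫⁻ ω, (ENNReal.ofReal (W ω * S ω)) ^ p ∂P
      ≤ μY * ∫⁻ ω, ENNReal.ofReal (((N ω : ℝ) * W ω) ^ p) ∂P := by
    calc ∫⁻ ω, (ENNReal.ofReal (W ω * S ω)) ^ p ∂P
        = ∑' n, ∫⁻ ω, g1 n ω * g2 n ω ∂P := by
          rw [← lintegral_tsum (f := fun n ω => g1 n ω * g2 n ω)
            fun n => ((hg1meas n).mul (hg2meas n)).aemeasurable]
          exact lintegral_congr hdecomp
      _ ≤ ∑' n, (∫⁻ ω, g1 n ω ∂P) * ((n : ENNReal) ^ p * μY) := by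
          refine ENNReal.tsum_le_tsum fun n => ?_
          rw [hfact n]
          exact mul_le_mul_right (hSn n) _
      _ = ∑' (n : ℕ), μY * ∫⁻ ω, (n : ENNReal) ^ p * g1 n ω ∂P := by
          refine tsum_congr fun n => ?_
          rw [lintegral_const_mul _ (hg1meas n)]
          ring
      _ = μY * ∑' (n : ℕ), ∫⁻ ω, (n : ENNReal) ^ p * g1 n ω ∂P := ENNReal.tsum_mul_left
      _ = μY * ∫⁻ ω, ENNReal.ofReal (((N ω : ℝ) * W ω) ^ p) ∂P := by
          congr 1
          rw [← lintegral_tsum fun n => (((hg1meas n).const_mul _)).aemeasurable]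
          refine lintegral_congr fun ω => ?_
          rw [tsum_eq_single (N ω) (fun n hn => ?_)]
          · rw [hg1]
            simp only [Set.indicator_of_mem (show ω ∈ N ⁻¹' {N ω} from rfl)]
            rw [Real.mul_rpow (Nat.cast_nonneg _) (hWpos ω),
              ENNReal.ofReal_mul (Real.rpow_nonneg (Nat.cast_nonneg _) p),
              ← ENNReal.ofReal_rpow_of_nonneg (Nat.cast_nonneg _) hp0.le,
              ENNReal.ofReal_natCast]
          · rw [hg1]
            simp [Set.indicator_of_notMem (show ω ∉ N ⁻¹' {n} by simp [hn.symm])]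
  -- put things together
  calc (∫⁻ ω, ENNReal.ofReal ((W ω * S ω + B ω) ^ p) ∂P) ^ (1/p)
      ≤ (∫⁻ ω, (ENNReal.ofReal (W ω * S ω)) ^ p ∂P) ^ (1/p)
        + (∫⁻ ω, (ENNReal.ofReal (B ω)) ^ p ∂P) ^ (1/p) := hmink
    _ ≤ (μY * ∫⁻ ω, ENNReal.ofReal (((N ω : ℝ) * W ω) ^ p) ∂P) ^ (1/p)
        + (∫⁻ ω, ENNReal.ofReal (B ω ^ p) ∂P) ^ (1/p) := by
        rw [hBterm]
        exact add_le_add_left (ENNReal.rpow_le_rpow hkey (by positivity)) _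
    _ = _ := by
        rw [ENNReal.mul_rpow_of_nonneg _ _ (by positivity : (0:ℝ) ≤ 1/p)]
end

section
/- Let (Ω, ℱ, P) be a probability space, (ℱ_n)_{n≥1} a sequence of sub-σ-algebras, and Z^{(n)} ≥ 0 integrable random variables. Suppose there is an integrable nonnegative random variable Z with law ν such that d_1(ν_n, ν) → 0 in probability as n → ∞, where ν_n is a regular conditional distribution of Z^{(n)} given ℱ_n and d_1 is the Wasserstein distance of order 1. Then, for any events ℰ_n (on the same probability space as Z^{(n)}) with P(ℰ_n | ℱ_n) → 0 in probability, one has E[Z^{(n)} 1(ℰ_n) | ℱ_n] → 0 in probability as n → ∞. -/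
open MeasureTheory ProbabilityTheory Filter
open scoped ENNReal

/-- The order-1 Wasserstein distance between probability measures on `ℝ`, via the coupling
formulation `d₁(μ, ν) = inf {E[|X − Y|] : law(X) = μ, law(Y) = ν}`. -/
noncomputable def wasserstein1 (μ ν : Measure ℝ) : ℝ≥0∞ :=
  ⨅ (π : Measure (ℝ × ℝ)) (_ : π.map Prod.fst = μ) (_ : π.map Prod.snd = ν),
    ∫⁻ z, ENNReal.ofReal |z.1 - z.2| ∂π

section Aux

variable {Ω : Type*} {m : MeasurableSpace Ω} {m0 : MeasurableSpace Ω} (P : Measure Ω)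
  [IsProbabilityMeasure P]

/-- Lemma A: disintegration identity for set-lintegrals. -/
lemma aux_lintegral (hm : m ≤ m0) (Z : Ω → ℝ) (hZ : Measurable[m0] Z)
    (ν : Ω → Measure ℝ) (hp : ∀ ω, IsProbabilityMeasure (ν ω))
    (hmeas : ∀ A : Set ℝ, MeasurableSet A → Measurable[m] fun ω => ν ω A)
    (hcond : ∀ A : Set ℝ, MeasurableSet A →
      (fun ω => (ν ω A).toReal) =ᵐ[P] P[Set.indicator (Z ⁻¹' A) (fun _ => (1:ℝ)) | m])
    (f : ℝ → ℝ≥0∞) (hf : Measurable f) :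
    (Measurable[m] fun ω => ∫⁻ x, f x ∂ν ω) ∧
      ∀ S : Set Ω, MeasurableSet[m] S →
        ∫⁻ ω in S, (∫⁻ x, f x ∂ν ω) ∂P = ∫⁻ ω in S, f (Z ω) ∂P := by
  haveI : SigmaFinite (P.trim hm) := by
    haveI := isFiniteMeasure_trim (μ := P) hm
    infer_instance
  -- the key identity for indicator sets
  have key : ∀ A : Set ℝ, MeasurableSet A → ∀ S : Set Ω, MeasurableSet[m] S →
      ∫⁻ ω in S, ν ω A ∂P = P (Z ⁻¹' A ∩ S) := by
    intro A hA S hS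
    have hSm : MeasurableSet[m0] S := hm S hS
    have hνm : Measurable[m0] fun ω => ν ω A := (hmeas A hA).mono hm le_rfl
    have hZA : MeasurableSet[m0] (Z ⁻¹' A) := hZ hA
    have hint : Integrable (Set.indicator (Z ⁻¹' A) fun _ => (1:ℝ)) P :=
      (integrable_const (1:ℝ)).indicator hZA
    have h1 : ∫ ω in S, (ν ω A).toReal ∂P
        = ∫ ω in S, (P[Set.indicator (Z ⁻¹' A) (fun _ => (1:ℝ)) | m]) ω ∂P :=
      integral_congr_ae (ae_restrict_of_ae (hcond A hA))
    have h2 : ∫ ω in S, (P[Set.indicator (Z ⁻¹' A) (fun _ => (1:ℝ)) | m]) ω ∂P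
        = ∫ ω in S, Set.indicator (Z ⁻¹' A) (fun _ => (1:ℝ)) ω ∂P :=
      setIntegral_condExp hm hint hS
    have h3 : ∫ ω in S, Set.indicator (Z ⁻¹' A) (fun _ => (1:ℝ)) ω ∂P
        = (P (Z ⁻¹' A ∩ S)).toReal := by
      rw [integral_indicator_const (1:ℝ) hZA,
        measureReal_def, Measure.restrict_apply hZA, smul_eq_mul, mul_one]
    have h4 : ∫ ω in S, (ν ω A).toReal ∂P = (∫⁻ ω in S, ν ω A ∂P).toReal :=
      integral_toReal (hνm.aemeasurable (μ := P.restrict S))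
        (Filter.Eventually.of_forall fun ω => (haveI := hp ω; measure_lt_top (ν ω) A))
    have hfin : ∫⁻ ω in S, ν ω A ∂P ≠ ∞ := by
      refine ne_of_lt (lt_of_le_of_lt ?_ (measure_lt_top (P.restrict S) Set.univ))
      calc ∫⁻ ω in S, ν ω A ∂P ≤ ∫⁻ _ in S, 1 ∂P :=
            lintegral_mono fun ω => haveI := hp ω; prob_le_one
        _ = P.restrict S Set.univ := by simp
    have : (∫⁻ ω in S, ν ω A ∂P).toReal = (P (Z ⁻¹' A ∩ S)).toReal := by
      rw [← h4, h1, h2, h3]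
    exact (ENNReal.toReal_eq_toReal_iff' hfin (measure_ne_top _ _)).mp this
  refine Measurable.ennreal_induction
    (motive := fun f => (Measurable[m] fun ω => ∫⁻ x, f x ∂ν ω) ∧
      ∀ S : Set Ω, MeasurableSet[m] S →
        ∫⁻ ω in S, (∫⁻ x, f x ∂ν ω) ∂P = ∫⁻ ω in S, f (Z ω) ∂P) ?_ ?_ ?_ hf
  · intro c A hA
    have heq : (fun ω => ∫⁻ x, A.indicator (fun _ => c) x ∂ν ω) = fun ω => c * ν ω A := by
      funext ω; rw [lintegral_indicator_const hA]
    constructor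
    · rw [heq]; exact (hmeas A hA).const_mul c
    · intro S hS
      have hr : ∀ ω, A.indicator (fun _ => c) (Z ω)
          = (Z ⁻¹' A).indicator (fun _ => c) ω := by
        intro ω
        by_cases h : Z ω ∈ A <;>
          simp [Set.indicator_of_mem, Set.indicator_of_notMem, h, Set.mem_preimage]
      rw [heq]
      calc ∫⁻ ω in S, c * ν ω A ∂P = c * ∫⁻ ω in S, ν ω A ∂P :=
            lintegral_const_mul c (((hmeas A hA).mono hm le_rfl) : Measurable[m0] _)
        _ = c * P (Z ⁻¹' A ∩ S) := by rw [key A hA S hS]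
        _ = ∫⁻ ω in S, (Z ⁻¹' A).indicator (fun _ => c) ω ∂P := by
            rw [lintegral_indicator_const (hZ hA : MeasurableSet[m0] _),
              Measure.restrict_apply (hZ hA : MeasurableSet[m0] _)]
        _ = ∫⁻ ω in S, A.indicator (fun _ => c) (Z ω) ∂P :=
            lintegral_congr fun ω => (hr ω).symm
  · intro f g _hdisj hfm hgm ihf ihg
    have heq : (fun ω => ∫⁻ x, (f + g) x ∂ν ω)
        = fun ω => (∫⁻ x, f x ∂ν ω) + ∫⁻ x, g x ∂ν ω := by
      funext ω; simp only [Pi.add_apply]; exact lintegral_add_left hfm _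
    constructor
    · rw [heq]; exact Measurable.add ihf.1 ihg.1
    · intro S hS
      rw [heq, lintegral_add_left ((ihf.1.mono hm le_rfl : Measurable[m0] _)),
        ihf.2 S hS, ihg.2 S hS]
      exact ((lintegral_add_left ((hfm.comp hZ : Measurable[m0] _)) _).symm.trans
        (lintegral_congr fun ω => rfl))
  · intro f hfm hmono ih
    have heq : (fun ω => ∫⁻ x, ⨆ j, f j x ∂ν ω)
        = fun ω => ⨆ j, ∫⁻ x, f j x ∂ν ω := by
      funext ω
      exact lintegral_iSup hfm hmono
    have hFmono : Monotone fun (j : ℕ) (ω : Ω) => ∫⁻ x, f j x ∂ν ω := fun i j hij ω =>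
      lintegral_mono fun x => hmono hij x
    constructor
    · show Measurable[m] fun ω => ∫⁻ x, ⨆ j, f j x ∂ν ω
      rw [heq]; exact Measurable.iSup fun j => (ih j).1
    · intro S hS
      show ∫⁻ ω in S, (∫⁻ x, ⨆ j, f j x ∂ν ω) ∂P = ∫⁻ ω in S, ⨆ j, f j (Z ω) ∂P
      rw [heq]
      calc ∫⁻ ω in S, ⨆ j, (∫⁻ x, f j x ∂ν ω) ∂P
          = ⨆ j, ∫⁻ ω in S, (∫⁻ x, f j x ∂ν ω) ∂P :=
            lintegral_iSup (fun j => ((ih j).1.mono hm le_rfl : Measurable[m0] _)) hFmono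
        _ = ⨆ j, ∫⁻ ω in S, f j (Z ω) ∂P := by simp only [fun j => (ih j).2 S hS]
        _ = ∫⁻ ω in S, ⨆ j, f j (Z ω) ∂P :=
            (lintegral_iSup (fun j => ((hfm j).comp hZ : Measurable[m0] _))
              (fun i j hij ω => hmono hij (Z ω))).symm

end Aux

section Aux2

variable {Ω : Type*} {m : MeasurableSpace Ω} {m0 : MeasurableSpace Ω} (P : Measure Ω)
  [IsProbabilityMeasure P]

lemma ofReal_eq_ofReal_max (a : ℝ) : ENNReal.ofReal a = ENNReal.ofReal (max a 0) := by
  rcases le_total a 0 with h | h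
  · rw [max_eq_right h, ENNReal.ofReal_of_nonpos h, ENNReal.ofReal_zero]
  · rw [max_eq_left h]

/-- Lemma B: the conditional expectation of `(Z - c)⁺` is computed by `ν`. -/
lemma aux_condexp (hm : m ≤ m0) (Z : Ω → ℝ) (hZ : Measurable[m0] Z)
    (hZint : Integrable Z P) (hZpos : ∀ ω, 0 ≤ Z ω)
    (ν : Ω → Measure ℝ) (hp : ∀ ω, IsProbabilityMeasure (ν ω))
    (hmeas : ∀ A : Set ℝ, MeasurableSet A → Measurable[m] fun ω => ν ω A)
    (hcond : ∀ A : Set ℝ, MeasurableSet A →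
      (fun ω => (ν ω A).toReal) =ᵐ[P] P[Set.indicator (Z ⁻¹' A) (fun _ => (1:ℝ)) | m])
    (c : ℝ) (hc : 0 ≤ c) :
    (fun ω => (∫⁻ x, ENNReal.ofReal (x - c) ∂ν ω).toReal)
      =ᵐ[P] P[fun ω => max (Z ω - c) 0 | m] := by
  haveI : SigmaFinite (P.trim hm) := by
    haveI := isFiniteMeasure_trim (μ := P) hm
    infer_instance
  have hfhat : Measurable fun x : ℝ => ENNReal.ofReal (x - c) :=
    ENNReal.measurable_ofReal.comp (measurable_id.sub measurable_const)
  obtain ⟨hFm, hFeq⟩ := aux_lintegral P hm Z hZ ν hp hmeas hcond _ hfhat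
  have hFm0 : Measurable[m0] fun ω => ∫⁻ x, ENNReal.ofReal (x - c) ∂ν ω := hFm.mono hm le_rfl
  have hcompose : ∀ ω, ENNReal.ofReal (Z ω - c) = ENNReal.ofReal (max (Z ω - c) 0) :=
    fun ω => ofReal_eq_ofReal_max _
  have hqmeas : Measurable[m0] fun ω => max (Z ω - c) 0 :=
    (hZ.sub measurable_const).max measurable_const
  have hqnn : ∀ ω, 0 ≤ max (Z ω - c) 0 := fun ω => le_max_right _ _
  have hqint : Integrable (fun ω => max (Z ω - c) 0) P := by
    refine hZint.mono hqmeas.aestronglyMeasurable (Filter.Eventually.of_forall fun ω => ?_)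
    rw [Real.norm_eq_abs, Real.norm_eq_abs, abs_of_nonneg (hqnn ω),
      abs_of_nonneg (hZpos ω)]
    rcases max_cases (Z ω - c) 0 with ⟨h1, _⟩ | ⟨h1, _⟩ <;> rw [h1] <;> [linarith; exact hZpos ω]
  have hlint_eq : ∫⁻ ω, (∫⁻ x, ENNReal.ofReal (x - c) ∂ν ω) ∂P
      = ∫⁻ ω, ENNReal.ofReal (max (Z ω - c) 0) ∂P := by
    have := hFeq Set.univ MeasurableSet.univ
    simp only [Measure.restrict_univ] at this
    rw [this]; exact lintegral_congr fun ω => hcompose ω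
  have hfin : ∫⁻ ω, (∫⁻ x, ENNReal.ofReal (x - c) ∂ν ω) ∂P ≠ ∞ := by
    rw [hlint_eq]
    exact ((hasFiniteIntegral_iff_ofReal
      (Filter.Eventually.of_forall hqnn)).mp hqint.2).ne
  have hae_fin : ∀ᵐ ω ∂P, (∫⁻ x, ENNReal.ofReal (x - c) ∂ν ω) < ∞ := ae_lt_top hFm0 hfin
  have hgint : Integrable (fun ω => (∫⁻ x, ENNReal.ofReal (x - c) ∂ν ω).toReal) P := by
    refine ⟨hFm0.ennreal_toReal.aestronglyMeasurable, ?_⟩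
    rw [hasFiniteIntegral_iff_ofReal (Filter.Eventually.of_forall fun ω =>
      ENNReal.toReal_nonneg)]
    exact lt_of_le_of_lt (lintegral_mono fun ω => ENNReal.ofReal_toReal_le) hfin.lt_top
  refine ae_eq_condExp_of_forall_setIntegral_eq hm hqint
    (fun s _ _ => hgint.integrableOn) (fun s hs _ => ?_) ?_
  · have e1 : ∫ ω in s, (∫⁻ x, ENNReal.ofReal (x - c) ∂ν ω).toReal ∂P
        = (∫⁻ ω in s, (∫⁻ x, ENNReal.ofReal (x - c) ∂ν ω) ∂P).toReal :=
      integral_toReal (hFm0.aemeasurable (μ := P.restrict s)) (ae_restrict_of_ae hae_fin)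
    have e2 : ∫⁻ ω in s, (∫⁻ x, ENNReal.ofReal (x - c) ∂ν ω) ∂P
        = ∫⁻ ω in s, ENNReal.ofReal (max (Z ω - c) 0) ∂P := by
      rw [hFeq s hs]
      exact lintegral_congr fun ω => hcompose ω
    have e3 : ∫ ω in s, max (Z ω - c) 0 ∂P
        = (∫⁻ ω in s, ENNReal.ofReal (max (Z ω - c) 0) ∂P).toReal :=
      integral_eq_lintegral_of_nonneg_ae (Filter.Eventually.of_forall hqnn)
        hqmeas.aestronglyMeasurable.restrict
    rw [e1, e2, e3]
  · exact StronglyMeasurable.aestronglyMeasurable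
      (Measurable.stronglyMeasurable hFm.ennreal_toReal)

/-- Lemma C: the easy direction of Kantorovich duality for `(x - c)⁺`. -/
lemma aux_wass (μ ρ : Measure ℝ) (c : ℝ) :
    ∫⁻ x, ENNReal.ofReal (x - c) ∂μ
      ≤ (∫⁻ x, ENNReal.ofReal (x - c) ∂ρ) + wasserstein1 μ ρ := by
  have hfhat : Measurable fun x : ℝ => ENNReal.ofReal (x - c) :=
    ENNReal.measurable_ofReal.comp (measurable_id.sub measurable_const)
  rw [wasserstein1, ENNReal.add_iInf]
  refine le_iInf fun π => ?_
  rw [ENNReal.add_iInf]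
  refine le_iInf fun h1 => ?_
  rw [ENNReal.add_iInf]
  refine le_iInf fun h2 => ?_
  have habs : Measurable fun z : ℝ × ℝ => ENNReal.ofReal |z.1 - z.2| :=
    ENNReal.measurable_ofReal.comp ((measurable_fst.sub measurable_snd).abs)
  calc ∫⁻ x, ENNReal.ofReal (x - c) ∂μ
      = ∫⁻ z : ℝ × ℝ, ENNReal.ofReal (z.1 - c) ∂π := by
        rw [← h1, lintegral_map hfhat measurable_fst]
    _ ≤ ∫⁻ z : ℝ × ℝ, (ENNReal.ofReal (z.2 - c) + ENNReal.ofReal |z.1 - z.2|) ∂π := by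
        refine lintegral_mono fun z => ?_
        calc ENNReal.ofReal (z.1 - c) ≤ ENNReal.ofReal ((z.2 - c) + |z.1 - z.2|) := by
              refine ENNReal.ofReal_le_ofReal ?_
              have := le_abs_self (z.1 - z.2)
              linarith
          _ ≤ ENNReal.ofReal (z.2 - c) + ENNReal.ofReal |z.1 - z.2| := ENNReal.ofReal_add_le
    _ = (∫⁻ z : ℝ × ℝ, ENNReal.ofReal (z.2 - c) ∂π)
          + ∫⁻ z : ℝ × ℝ, ENNReal.ofReal |z.1 - z.2| ∂π :=
        lintegral_add_left (hfhat.comp measurable_snd) _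
    _ = (∫⁻ x, ENNReal.ofReal (x - c) ∂ρ) + ∫⁻ z : ℝ × ℝ, ENNReal.ofReal |z.1 - z.2| ∂π := by
        rw [← h2, lintegral_map hfhat measurable_snd]

/-- Lemma D: tail expectations of an integrable nonnegative function vanish. -/
lemma aux_tail {m0 : MeasurableSpace Ω} (P : Measure Ω) [IsProbabilityMeasure P]
    (Zlim : Ω → ℝ) (hZlm : Measurable[m0] Zlim) (hZlpos : ∀ ω, 0 ≤ Zlim ω)
    (hZlint : Integrable Zlim P) :
    Filter.Tendsto (fun j : ℕ => ∫⁻ x, ENNReal.ofReal (x - j) ∂(P.map Zlim)) Filter.atTop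
      (nhds 0) := by
  have hmeq : ∀ j : ℕ, ∫⁻ x, ENNReal.ofReal (x - j) ∂(P.map Zlim)
      = ∫⁻ ω, ENNReal.ofReal (Zlim ω - j) ∂P := fun j =>
    lintegral_map (ENNReal.measurable_ofReal.comp (measurable_id.sub measurable_const)) hZlm
  simp only [hmeq]
  have h0 : (0 : ℝ≥0∞) = ∫⁻ ω, (0 : ℝ≥0∞) ∂P := by simp
  rw [show (nhds (0:ℝ≥0∞)) = nhds (∫⁻ _, (0:ℝ≥0∞) ∂P) by rw [← h0]]
  refine tendsto_lintegral_of_dominated_convergence (fun ω => ENNReal.ofReal (Zlim ω))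
    (fun j => ENNReal.measurable_ofReal.comp (hZlm.sub measurable_const)) ?_ ?_ ?_
  · intro j
    exact Filter.Eventually.of_forall fun ω =>
      ENNReal.ofReal_le_ofReal (by have : (0:ℝ) ≤ (j:ℝ) := Nat.cast_nonneg j; linarith)
  · exact ((hasFiniteIntegral_iff_ofReal
      (Filter.Eventually.of_forall hZlpos)).mp hZlint.2).ne
  · refine Filter.Eventually.of_forall fun ω => ?_
    refine Filter.Tendsto.congr' ?_ tendsto_const_nhds
    filter_upwards [Filter.eventually_ge_atTop ⌈Zlim ω⌉₊] with j hj
    refine (ENNReal.ofReal_eq_zero.mpr ?_).symm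
    have h1 : Zlim ω ≤ (⌈Zlim ω⌉₊ : ℝ) := Nat.le_ceil _
    have h2 : ((⌈Zlim ω⌉₊ : ℕ) : ℝ) ≤ (j : ℝ) := Nat.cast_le.mpr hj
    linarith

end Aux2


/-- **Conditional uniform integrability lemma.**
Let `(Ω, ℱ, P)` be a probability space, `(ℱ_n)` sub-σ-algebras, and `Z^{(n)} ≥ 0` integrable.
If there is an integrable nonnegative `Z` whose law `ν` satisfies `d₁(ν_n, ν) → 0` in
probability, where `ν_n` is a regular conditional distribution of `Z^{(n)}` given `ℱ_n`, then
for any events `ℰ_n` with `P(ℰ_n | ℱ_n) → 0` in probability, one has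
`E[Z^{(n)} 1(ℰ_n) | ℱ_n] → 0` in probability. -/
theorem condExp_indicator_tendsto_zero
    {Ω : Type*} {m0 : MeasurableSpace Ω} (P : Measure Ω) [IsProbabilityMeasure P]
    (F : ℕ → MeasurableSpace Ω) (hF : ∀ n, F n ≤ m0)
    (Z : ℕ → Ω → ℝ) (hZmeas : ∀ n, Measurable (Z n)) (hZpos : ∀ n ω, 0 ≤ Z n ω)
    (hZint : ∀ n, Integrable (Z n) P)
    (Zlim : Ω → ℝ) (hZlm : Measurable Zlim) (hZlpos : ∀ ω, 0 ≤ Zlim ω)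
    (hZlint : Integrable Zlim P)
    -- ν_n : a regular conditional distribution of Z^{(n)} given ℱ_n
    (ν : ℕ → Ω → Measure ℝ)
    (hνprob : ∀ n ω, IsProbabilityMeasure (ν n ω))
    (hνmeas : ∀ n (A : Set ℝ), MeasurableSet A → Measurable[F n] (fun ω => ν n ω A))
    (hνcond : ∀ n (A : Set ℝ), MeasurableSet A →
      (fun ω => (ν n ω A).toReal)
        =ᵐ[P] P[Set.indicator ((Z n) ⁻¹' A) (fun _ => (1:ℝ)) | F n])
    -- d₁(ν_n, law(Z)) → 0 in probability
    (hconv : ∀ δ : ℝ≥0∞, 0 < δ →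
      Tendsto (fun n => P {ω | δ ≤ wasserstein1 (ν n ω) (P.map Zlim)}) atTop (nhds 0))
    -- events whose conditional probability given ℱ_n tends to zero in probability
    (Ev : ℕ → Set Ω) (hEv : ∀ n, MeasurableSet (Ev n))
    (hEconv : TendstoInMeasure P
      (fun n => P[Set.indicator (Ev n) (fun _ => (1:ℝ)) | F n]) atTop 0) :
    TendstoInMeasure P (fun n => P[Set.indicator (Ev n) (Z n) | F n]) atTop 0 := by

  rw [tendstoInMeasure_iff_dist] at hEconv ⊢
  intro ε hε
  set νZ := P.map Zlim with hνZ
  set δ : ℝ≥0∞ := ENNReal.ofReal (ε / 8) with hδdef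
  have hδpos : 0 < δ := ENNReal.ofReal_pos.mpr (by linarith)
  -- choose the truncation level
  have htail := aux_tail P Zlim hZlm hZlpos hZlint
  obtain ⟨j, hBj, hj1⟩ := ((htail.eventually_lt_const hδpos).and
    (Filter.eventually_ge_atTop 1)).exists
  set c : ℝ := (j : ℝ) with hcdef
  have hc0 : 0 ≤ c := Nat.cast_nonneg j
  have hc1 : 1 ≤ c := by rw [hcdef]; exact_mod_cast hj1
  set K : ℝ := 2 * c with hKdef
  have hK : 0 < K := by linarith
  -- notation
  set f : ℕ → Ω → ℝ := fun n => P[Set.indicator (Ev n) (Z n) | F n] with hfdef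
  set p : ℕ → Ω → ℝ := fun n => P[Set.indicator (Ev n) (fun _ => (1:ℝ)) | F n] with hpdef
  set W : ℕ → Ω → ℝ≥0∞ := fun n ω => ∫⁻ x, ENNReal.ofReal (x - c) ∂ν n ω with hWdef
  -- nonnegativity of f n
  have hnonneg : ∀ n, 0 ≤ᵐ[P] f n := fun n =>
    condExp_nonneg (Filter.Eventually.of_forall fun ω =>
      Set.indicator_nonneg (fun ω _ => hZpos n ω) ω)
  -- splitting inequality
  have hsplit : ∀ n, ∀ᵐ ω ∂P, f n ω ≤ K * p n ω + 2 * (W n ω).toReal := by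
    intro n
    have hqint : Integrable (fun ω => max (Z n ω - c) 0) P := by
      refine (hZint n).mono (((hZmeas n).sub measurable_const).max
        measurable_const).aestronglyMeasurable (Filter.Eventually.of_forall fun ω => ?_)
      rw [Real.norm_eq_abs, Real.norm_eq_abs, abs_of_nonneg (le_max_right _ _),
        abs_of_nonneg (hZpos n ω)]
      rcases max_cases (Z n ω - c) 0 with ⟨h1, _⟩ | ⟨h1, _⟩ <;> rw [h1] <;>
        [linarith; exact hZpos n ω]
    have hindint : Integrable (Set.indicator (Ev n) (Z n)) P := (hZint n).indicator (hEv n)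
    have h1int : Integrable (Set.indicator (Ev n) fun _ => (1:ℝ)) P :=
      (integrable_const (1:ℝ)).indicator (hEv n)
    have hrhsint : Integrable (fun ω => K * Set.indicator (Ev n) (fun _ => (1:ℝ)) ω
        + 2 * max (Z n ω - c) 0) P := (h1int.const_mul K).add (hqint.const_mul 2)
    have hpoint : Set.indicator (Ev n) (Z n)
        ≤ᵐ[P] fun ω => K * Set.indicator (Ev n) (fun _ => (1:ℝ)) ω
          + 2 * max (Z n ω - c) 0 := by
      refine Filter.Eventually.of_forall fun ω => ?_
      show Set.indicator (Ev n) (Z n) ω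
          ≤ K * Set.indicator (Ev n) (fun _ => (1:ℝ)) ω + 2 * max (Z n ω - c) 0
      by_cases h : ω ∈ Ev n
      · rw [Set.indicator_of_mem h, Set.indicator_of_mem h]
        rcases le_total (Z n ω) K with hZK | hZK
        · have : (0:ℝ) ≤ max (Z n ω - c) 0 := le_max_right _ _
          linarith
        · have : Z n ω - c ≤ max (Z n ω - c) 0 := le_max_left _ _
          have hKc : K = 2 * c := hKdef
          linarith
      · rw [Set.indicator_of_notMem h, Set.indicator_of_notMem h]
        have h1 : (0:ℝ) ≤ max (Z n ω - c) 0 := le_max_right _ _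
        have h2 : K * (0:ℝ) = 0 := mul_zero K
        nlinarith
    have hmono := condExp_mono (m := F n) hindint hrhsint hpoint
    have hadd : P[fun ω => K * Set.indicator (Ev n) (fun _ => (1:ℝ)) ω
          + 2 * max (Z n ω - c) 0 | F n]
        =ᵐ[P] fun ω => (P[fun ω => K * Set.indicator (Ev n) (fun _ => (1:ℝ)) ω | F n]) ω
          + (P[fun ω => 2 * max (Z n ω - c) 0 | F n]) ω :=
      condExp_add (h1int.const_mul K) (hqint.const_mul 2) (F n)
    have hsm1 : P[fun ω => K * Set.indicator (Ev n) (fun _ => (1:ℝ)) ω | F n]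
        =ᵐ[P] fun ω => K * p n ω := condExp_smul (μ := P) (m := F n) (K:ℝ) _
    have hsm2 : P[fun ω => 2 * max (Z n ω - c) 0 | F n]
        =ᵐ[P] fun ω => 2 * (P[fun ω => max (Z n ω - c) 0 | F n]) ω :=
      condExp_smul (μ := P) (m := F n) (2:ℝ) _
    have hB := aux_condexp P (hF n) (Z n) (hZmeas n) (hZint n) (hZpos n) (ν n)
      (hνprob n) (hνmeas n) (hνcond n) c hc0
    filter_upwards [hmono, hadd, hsm1, hsm2, hB] with ω w1 w2 w3 w4 w5
    rw [hfdef]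
    calc (P[Set.indicator (Ev n) (Z n) | F n]) ω
        ≤ (P[fun ω => K * Set.indicator (Ev n) (fun _ => (1:ℝ)) ω
            + 2 * max (Z n ω - c) 0 | F n]) ω := w1
      _ = (P[fun ω => K * Set.indicator (Ev n) (fun _ => (1:ℝ)) ω | F n]) ω
            + (P[fun ω => 2 * max (Z n ω - c) 0 | F n]) ω := w2
      _ = K * p n ω + 2 * (P[fun ω => max (Z n ω - c) 0 | F n]) ω := by rw [w3, w4]
      _ = K * p n ω + 2 * (W n ω).toReal := by rw [← w5]
  -- the inclusion of bad sets
  have hsub : ∀ n, ∀ᵐ ω ∂P, ω ∈ {ω | ε ≤ dist (f n ω) ((0 : Ω → ℝ) ω)} →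
      ω ∈ (({ω | ε / (2 * K) ≤ dist (p n ω) ((0 : Ω → ℝ) ω)}
        ∪ {ω | δ ≤ wasserstein1 (ν n ω) νZ} : Set Ω)) := by
    intro n
    filter_upwards [hsplit n, hnonneg n] with ω hle hpos hin
    simp only [Set.mem_setOf_eq, Set.mem_union, Pi.zero_apply, Real.dist_eq,
      sub_zero] at hin ⊢
    rw [abs_of_nonneg hpos] at hin
    rcases le_or_gt δ (wasserstein1 (ν n ω) νZ) with h | h
    · exact Or.inr h
    · left
      refine le_trans ?_ (le_abs_self _)
      by_contra hcon
      push_neg at hcon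
      have hW : W n ω < ENNReal.ofReal (ε / 4) := by
        have h1 : W n ω ≤ (∫⁻ x, ENNReal.ofReal (x - c) ∂νZ)
            + wasserstein1 (ν n ω) νZ := aux_wass (ν n ω) νZ c
        have h2 : (∫⁻ x, ENNReal.ofReal (x - c) ∂νZ) + wasserstein1 (ν n ω) νZ < δ + δ :=
          ENNReal.add_lt_add hBj h
        have h3 : δ + δ = ENNReal.ofReal (ε / 4) := by
          rw [hδdef, ← ENNReal.ofReal_add (by linarith) (by linarith)]
          congr 1
          ring
        exact lt_of_le_of_lt h1 (h3 ▸ h2)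
      have hWr : (W n ω).toReal < ε / 4 := ENNReal.toReal_lt_of_lt_ofReal hW
      have hKp : K * p n ω < ε / 2 := by
        calc K * p n ω < K * (ε / (2 * K)) := mul_lt_mul_of_pos_left hcon hK
          _ = ε / 2 := by field_simp
      linarith
  -- conclude
  have hbound : ∀ n, P {ω | ε ≤ dist (f n ω) ((0 : Ω → ℝ) ω)}
      ≤ P {ω | ε / (2 * K) ≤ dist (p n ω) ((0 : Ω → ℝ) ω)}
        + P {ω | δ ≤ wasserstein1 (ν n ω) νZ} := fun n =>
    (measure_mono_ae (hsub n)).trans (measure_union_le _ _)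
  have h1 := hEconv (ε / (2 * K)) (by positivity)
  have h2 := hconv δ hδpos
  have hsum : Tendsto (fun n => P {ω | ε / (2 * K) ≤ dist (p n ω) ((0 : Ω → ℝ) ω)}
      + P {ω | δ ≤ wasserstein1 (ν n ω) νZ}) atTop (nhds 0) := by
    have := h1.add h2
    simpa using this
  exact tendsto_of_tendsto_of_tendsto_of_le_of_le tendsto_const_nhds hsum
    (fun n => zero_le) hbound
end
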